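/- Let n ≥ m ≥ 0 be integers and let 0 ≤ i ≤ m. Then for all t, B_i^m(t) = C(m,i) · Σ_{h=0}^{n} C(n-m, h-i) C(n,h)^{-1} B_h^n(t), with the convention that C(u,v) = 0 whenever v < 0 or v > u. -/

import Mathlib

open MeasureTheory Polynomial

/-- Bernstein polynomial `B_i^n(t) = C(n,i) t^i (1-t)^{n-i}` as a real function. -/
noncomputable def bern (n i : ℕ) (t : ℝ) : ℝ := (n.choose i : ℝ) * t ^ i * (1 - t) ^ (n - i)

/-- Binomial coefficient `C(u,v)` for an integer `v`, with the convention that it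
vanishes when `v < 0` or `v > u`. -/
noncomputable def chZ (u : ℕ) (v : ℤ) : ℝ := if 0 ≤ v then (u.choose v.toNat : ℝ) else 0

lemma key_sum (n m i : ℕ) (hmn : m ≤ n) (hi : i ≤ m) (t : ℝ) :
    ∑ h ∈ Finset.range (n + 1),
        chZ (n - m) ((h : ℤ) - (i : ℤ)) * t ^ h * (1 - t) ^ (n - h)
      = t ^ i * (1 - t) ^ (m - i) := by
  have emb : Function.Injective (fun j : ℕ => i + j) := fun a b h => by simp only [] at h; omega
  rw [← Finset.sum_subset
      (s₁ := (Finset.range (n - m + 1)).map ⟨fun j => i + j, emb⟩)]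
  · rw [Finset.sum_map]
    have hb := add_pow t (1 - t) (n - m)
    rw [show t + (1 - t) = 1 by ring, one_pow] at hb
    calc ∑ j ∈ Finset.range (n - m + 1),
          chZ (n - m) (((i + j : ℕ) : ℤ) - (i : ℤ)) * t ^ (i + j) * (1 - t) ^ (n - (i + j))
        = ∑ j ∈ Finset.range (n - m + 1),
          t ^ i * (1 - t) ^ (m - i) * (t ^ j * (1 - t) ^ (n - m - j) * ((n - m).choose j : ℝ)) := by
          refine Finset.sum_congr rfl fun j hj => ?_
          have hj' : j ≤ n - m := by simpa [Nat.lt_succ_iff] using hj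
          have h1 : (((i + j : ℕ) : ℤ) - (i : ℤ)) = (j : ℤ) := by push_cast; ring
          have h2 : n - (i + j) = (m - i) + (n - m - j) := by omega
          rw [h1, h2, pow_add, pow_add]
          simp [chZ]
          ring
      _ = t ^ i * (1 - t) ^ (m - i) := by
          rw [← Finset.mul_sum, ← hb, mul_one]
  · intro h hh
    simp only [Finset.mem_map, Finset.mem_range, Function.Embedding.coeFn_mk] at hh ⊢
    obtain ⟨j, hj, rfl⟩ := hh
    omega
  · intro h hh hnot
    simp only [Finset.mem_map, Finset.mem_range, Function.Embedding.coeFn_mk] at hh hnot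
    rcases lt_or_ge h i with hlt | hge
    · have : ¬ (0 : ℤ) ≤ (h : ℤ) - (i : ℤ) := by omega
      simp [chZ, this]
      intro hih
      exact absurd hih (by omega)
    · have h1 : (0 : ℤ) ≤ (h : ℤ) - (i : ℤ) := by omega
      have h2 : ((h : ℤ) - (i : ℤ)).toNat = h - i := by omega
      have h3 : n - m < h - i := by
        by_contra h3
        exact hnot ⟨h - i, by omega, by omega⟩
      simp [chZ, h1, h2, Nat.choose_eq_zero_of_lt h3]

theorem stmt3 (n m i : ℕ) (hmn : m ≤ n) (hi : i ≤ m) (t : ℝ) :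
    bern m i t =
      (m.choose i : ℝ) *
        ∑ h ∈ Finset.range (n + 1),
          chZ (n - m) ((h : ℤ) - (i : ℤ)) * ((n.choose h : ℝ))⁻¹ * bern n h t := by
  have hsum : ∀ h ∈ Finset.range (n + 1),
      chZ (n - m) ((h : ℤ) - (i : ℤ)) * ((n.choose h : ℝ))⁻¹ * bern n h t
        = chZ (n - m) ((h : ℤ) - (i : ℤ)) * t ^ h * (1 - t) ^ (n - h) := by
    intro h hh
    have hh' : h ≤ n := by simpa [Nat.lt_succ_iff] using hh
    have hc : (n.choose h : ℝ) ≠ 0 := by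
      exact_mod_cast Nat.choose_pos hh' |>.ne'
    unfold bern
    field_simp
  rw [Finset.sum_congr rfl hsum, key_sum n m i hmn hi t]
  unfold bern
  ring
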